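/- If (x_n) and (y_n) are bounded sequences in a Banach space with ∑_n ‖x_n − y_n‖ < ∞, then the set {x_n : n ∈ ℕ} is a Banach-Saks set if and only if {y_n : n ∈ ℕ} is a Banach-Saks set. -/

import Mathlib

open Filter

/-- A subset `A` of a Banach space is a Banach-Saks set if every sequence in `A`
has a subsequence whose Cesàro means converge in norm. -/
def IsBanachSaksSet {X : Type*} [NormedAddCommGroup X] [NormedSpace ℝ X] (A : Set X) : Prop :=
  ∀ x : ℕ → X, (∀ n, x n ∈ A) → ∃ φ : ℕ → ℕ, StrictMono φ ∧ ∃ L : X,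
    Tendsto (fun N : ℕ => (N : ℝ)⁻¹ • ∑ k ∈ Finset.range N, x (φ k)) atTop (nhds L)

lemma banachSaks_aux {X : Type*} [NormedAddCommGroup X] [NormedSpace ℝ X] (x y : ℕ → X)
    (hsum : Summable fun n => ‖x n - y n‖)
    (h : IsBanachSaksSet (Set.range x)) : IsBanachSaksSet (Set.range y) := by
  intro z hz
  choose g hg using hz
  by_cases hcase : ∃ m, ∃ᶠ n in atTop, g n = m
  · -- some value is attained infinitely often; take the constant subsequence
    obtain ⟨m, hm⟩ := hcase
    obtain ⟨ψ, hψ, hψm⟩ := extraction_of_frequently_atTop hm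
    refine ⟨ψ, hψ, y m, ?_⟩
    have hconst : ∀ n, z (ψ n) = y m := fun n => by rw [← hg (ψ n), hψm n]
    have : ∀ᶠ N : ℕ in atTop, (N : ℝ)⁻¹ • ∑ k ∈ Finset.range N, z (ψ k) = y m := by
      filter_upwards [eventually_gt_atTop 0] with N hN
      have : ∑ k ∈ Finset.range N, z (ψ k) = (N : ℝ) • y m := by
        simp [hconst, Finset.sum_const, ← Nat.cast_smul_eq_nsmul ℝ]
      rw [this, smul_smul, inv_mul_cancel₀ (by positivity), one_smul]
    exact Tendsto.congr' (by filter_upwards [this] with N hN using hN.symm) tendsto_const_nhds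
  · -- every value attained finitely often: g → ∞, extract strictly monotone g ∘ ψ
    push_neg at hcase
    have hgtop : Tendsto g atTop atTop := by
      rw [tendsto_atTop]
      intro b
      have : ∀ᶠ n in atTop, ∀ m ∈ Finset.range b, g n ≠ m := by
        rw [Filter.eventually_all_finset]
        intro m _
        simpa [Filter.not_frequently] using hcase m
      filter_upwards [this] with n hn
      by_contra hb
      exact hn (g n) (Finset.mem_range.2 (lt_of_not_ge hb)) rfl
    obtain ⟨ψ, hψ, hgψ⟩ := strictMono_subseq_of_tendsto_atTop hgtop
    obtain ⟨φ, hφ, L, hL⟩ := h (fun n => x (g (ψ n))) (fun n => Set.mem_range_self _)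
    refine ⟨ψ ∘ φ, hψ.comp hφ, L, ?_⟩
    set h' : ℕ → ℕ := g ∘ ψ ∘ φ with hh'
    have hh'mono : StrictMono h' := hgψ.comp hφ
    obtain ⟨S, hS⟩ := hsum
    have hSnn : ∀ n, 0 ≤ ‖x n - y n‖ := fun n => norm_nonneg _
    -- the difference of Cesàro means tends to 0
    have hdiff : Tendsto (fun N : ℕ =>
        (N : ℝ)⁻¹ • ∑ k ∈ Finset.range N, (x (h' k) - y (h' k))) atTop (nhds 0) := by
      apply squeeze_zero_norm (a := fun N : ℕ => (N : ℝ)⁻¹ * S)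
      · intro N
        rw [norm_smul, norm_inv, Real.norm_natCast]
        rcases Nat.eq_zero_or_pos N with rfl | hN
        · simp
        gcongr
        calc ‖∑ k ∈ Finset.range N, (x (h' k) - y (h' k))‖
            ≤ ∑ k ∈ Finset.range N, ‖x (h' k) - y (h' k)‖ := norm_sum_le _ _
          _ = ∑ m ∈ (Finset.range N).image h', ‖x m - y m‖ := by
              rw [Finset.sum_image (fun a _ b _ hab => hh'mono.injective hab)]
          _ ≤ S := hS.tsum_eq ▸ Summable.sum_le_tsum _ (fun n _ => hSnn n) hS.summable
      · have : Tendsto (fun N : ℕ => (N : ℝ)⁻¹) atTop (nhds 0) :=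
          tendsto_inv_atTop_zero.comp tendsto_natCast_atTop_atTop
        simpa using this.mul_const S
    have key : ∀ N : ℕ, (N : ℝ)⁻¹ • ∑ k ∈ Finset.range N, z ((ψ ∘ φ) k) =
        (N : ℝ)⁻¹ • (∑ k ∈ Finset.range N, x (h' k)) -
        (N : ℝ)⁻¹ • ∑ k ∈ Finset.range N, (x (h' k) - y (h' k)) := by
      intro N
      rw [← smul_sub, ← Finset.sum_sub_distrib]
      congr 1
      refine Finset.sum_congr rfl fun k _ => ?_
      rw [← hg ((ψ ∘ φ) k)]
      simp [hh']
    simp only [key]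
    simpa [hh'] using hL.sub hdiff

/-- If `(x n)` and `(y n)` are bounded sequences with `∑ ‖x n - y n‖ < ∞`, then
`{x n}` is a Banach-Saks set iff `{y n}` is a Banach-Saks set. -/
theorem banachSaks_of_summable_perturbation {X : Type*} [NormedAddCommGroup X]
    [NormedSpace ℝ X] (x y : ℕ → X)
    (hx : ∃ C : ℝ, ∀ n, ‖x n‖ ≤ C) (hy : ∃ C : ℝ, ∀ n, ‖y n‖ ≤ C)
    (hsum : Summable fun n => ‖x n - y n‖) :
    IsBanachSaksSet (Set.range x) ↔ IsBanachSaksSet (Set.range y) := by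
  have hsum' : Summable fun n => ‖y n - x n‖ := by
    simpa [norm_sub_rev] using hsum
  exact ⟨banachSaks_aux x y hsum, banachSaks_aux y x hsum'⟩
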